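/- Let X be a nontrivial finite group with k := k(X) conjugacy classes, let H ≤ Sym({1,…,n}) be a permutation group, and let G = X ≀ H. Let H act on the set S^n of functions {1,…,n} → S by permuting coordinates, where S is the set of conjugacy classes of X (equivalently, a set in bijection with Irr(X)). If f₁, …, f_f is a complete list of representatives of the distinct orbits of H on S^n, then k(G) = Σ_{i=1}^{f} k(Stab_H(f_i)), where Stab_H(f_i) is the stabilizer in H of the function f_i (the inertia group of the corresponding irreducible character of X^n). -/

import Mathlib

open Equiv MulAction

/-- The number of conjugacy classes of a group. -/
noncomputable def kclass (G : Type*) [Group G] : ℕ := Nat.card (ConjClasses G)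

/-- The coordinate-permuting action of `Perm ι` on `ι → X`, as automorphisms. -/
def permAut (ι X : Type*) [Group X] : Perm ι →* MulAut (ι → X) where
  toFun e :=
    { toFun := fun f => f ∘ e.symm
      invFun := fun f => f ∘ e
      left_inv := fun f => by funext i; simp
      right_inv := fun f => by funext i; simp
      map_mul' := fun f g => rfl }
  map_one' := by ext f; rfl
  map_mul' := fun e₁ e₂ => by ext f; rfl

/-- The wreath product `X ≀ H` of a group `X` with a permutation group `H ≤ Perm ι`,
i.e. the semidirect product `X^ι ⋊ H` where `H` permutes the direct factors of `X^ι`. -/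
abbrev Wreath (X : Type*) [Group X] {ι : Type*} (H : Subgroup (Perm ι)) :=
  SemidirectProduct (ι → X) H ((permAut ι X).comp H.subtype)

/-- A group acting on `Ω` acts on the functions `Ω → S` by permuting coordinates. -/
instance funMulAction (G Ω S : Type*) [Group G] [MulAction G Ω] : MulAction G (Ω → S) where
  smul g f := fun ω => f (g⁻¹ • ω)
  one_smul f := funext fun ω => by
    show f ((1 : G)⁻¹ • ω) = f ω
    rw [inv_one, one_smul]
  mul_smul g h f := funext fun ω => by
    show f ((g * h)⁻¹ • ω) = f (h⁻¹ • g⁻¹ • ω)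
    rw [mul_inv_rev, mul_smul]

namespace WreathAux

variable {n : ℕ} {X : Type} [Group X] {H : Subgroup (Perm (Fin n))}

/-- the underlying permutation of the `H`-component. -/
abbrev sig (x : Wreath X H) : Perm (Fin n) := (x.right : Perm (Fin n))

lemma phi_apply (g : H) (v : Fin n → X) (i : Fin n) :
    ((permAut (Fin n) X).comp H.subtype g) v i = v ((g : Perm (Fin n))⁻¹ i) := rfl

lemma right_pow (x : Wreath X H) (j : ℕ) : (x ^ j).right = x.right ^ j := by
  rw [← SemidirectProduct.rightHom_eq_right]; exact map_pow _ _ _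

lemma sig_pow (x : Wreath X H) (j : ℕ) : sig (x ^ j) = sig x ^ j := by
  rw [sig, right_pow]; simp

lemma left_pow_succ (x : Wreath X H) (j : ℕ) (i : Fin n) :
    (x ^ (j + 1)).left i = (x ^ j).left i * x.left (((sig x)⁻¹ ^ j) i) := by
  rw [pow_succ, SemidirectProduct.mul_left, Pi.mul_apply, phi_apply, right_pow]
  simp [inv_pow]

lemma period_conj {G : Type*} {α : Type*} [Group G] [Finite G] [MulAction G α]
    (g h : G) (a : α) : period (g * h * g⁻¹) (g • a) = period h a := by
  have h1 : ∀ k : ℕ, (g * h * g⁻¹) ^ k • (g • a) = g • (h ^ k • a) := by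
    intro k
    rw [conj_pow, mul_smul, mul_smul, inv_smul_smul]
  apply le_antisymm
  · apply period_le_of_fixed (period_pos_of_orderOf_pos (orderOf_pos h) a)
    rw [h1, pow_period_smul]
  · apply period_le_of_fixed (period_pos_of_orderOf_pos (orderOf_pos _) (g • a))
    have := h1 (period (g * h * g⁻¹) (g • a))
    rw [pow_period_smul] at this
    exact smul_left_cancel g this.symm

/-- the "cycle product" invariant of `x` at coordinate `i`. -/
noncomputable def invAt (x : Wreath X H) (i : Fin n) : X :=
  (x ^ period (sig x) i).left i

lemma sig_conj (z x : Wreath X H) : sig (z * x * z⁻¹) = sig z * sig x * (sig z)⁻¹ := by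
  simp [sig, SemidirectProduct.mul_right, SemidirectProduct.inv_right]

lemma permAut_apply {ι : Type*} (e : Perm ι) (v : ι → X) (i : ι) :
    permAut ι X e v i = v (e⁻¹ i) := rfl

lemma perm_apply_inv_self (e : Perm (Fin n)) (x : Fin n) : e (e⁻¹ x) = x :=
  e.apply_symm_apply x

lemma perm_inv_apply_self (e : Perm (Fin n)) (x : Fin n) : e⁻¹ (e x) = x :=
  e.symm_apply_apply x

lemma conj_left_apply (z y : Wreath X H) (i : Fin n) :
    (z * y * z⁻¹).left (sig z i) =
      z.left (sig z i) * y.left i * (z.left (sig z ((sig y)⁻¹ i)))⁻¹ := by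
  rw [SemidirectProduct.mul_left, SemidirectProduct.mul_left, SemidirectProduct.inv_left,
    SemidirectProduct.mul_right]
  simp only [Pi.mul_apply, MonoidHom.comp_apply, Subgroup.coe_subtype, ← map_inv,
    permAut_apply, Pi.inv_apply, mul_inv_rev, inv_inv, Perm.mul_apply, perm_inv_apply_self,
    perm_apply_inv_self, Subgroup.coe_mul, InvMemClass.coe_inv]

lemma invAt_conj (z x : Wreath X H) (i : Fin n) :
    invAt (z * x * z⁻¹) (sig z i) =
      z.left (sig z i) * invAt x i * (z.left (sig z i))⁻¹ := by
  have hper : period (sig (z * x * z⁻¹)) (sig z i) = period (sig x) i := by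
    rw [sig_conj, show sig z i = sig z • i from rfl, period_conj]
  unfold invAt
  rw [hper, conj_pow, conj_left_apply]
  have hfix : (sig (x ^ period (sig x) i))⁻¹ i = i := by
    rw [sig_pow]
    have : (sig x ^ period (sig x) i) i = i := pow_period_smul (sig x) i
    exact Perm.inv_eq_iff_eq.mpr this.symm
  rw [hfix]

noncomputable def fInv (x : Wreath X H) : Fin n → ConjClasses X :=
  fun i => ConjClasses.mk (invAt x i)

lemma fInv_conj (z x : Wreath X H) : fInv (z * x * z⁻¹) = z.right • fInv x := by
  funext i
  show ConjClasses.mk (invAt (z * x * z⁻¹) i) = ConjClasses.mk (invAt x ((z.right)⁻¹ • i))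
  have h1 : sig z ((sig z)⁻¹ i) = i := perm_apply_inv_self _ _
  have h2 : ((z.right)⁻¹ : H) • i = (sig z)⁻¹ i := rfl
  have h3 := invAt_conj z x ((sig z)⁻¹ i)
  rw [h1] at h3
  rw [h2, h3, ConjClasses.mk_eq_mk_iff_isConj, isConj_iff]
  exact ⟨(z.left i)⁻¹, by group⟩

lemma fInv_fixed (x : Wreath X H) : x.right • fInv x = fInv x := by
  have := fInv_conj x x
  rw [show x * x * x⁻¹ = x by group] at this
  exact this.symm

variable (n X H) in
/-- pairs of an `H`-fixed `(ConjClasses X)`-labelling and the fixing element. -/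
def Pset : Type :=
  {p : (Fin n → ConjClasses X) × H // p.2 • p.1 = p.1}

instance : MulAction H (Pset n X H) where
  smul g p := ⟨(g • p.1.1, g * p.1.2 * g⁻¹), by
    show (g * p.1.2 * g⁻¹) • g • p.1.1 = g • p.1.1
    rw [mul_smul, mul_smul, inv_smul_smul, p.2]⟩
  one_smul p := by
    apply Subtype.ext
    show (((1 : H) • p.1.1, 1 * p.1.2 * 1⁻¹) : _ × _) = p.1
    rw [one_smul, one_mul, inv_one, mul_one]
  mul_smul g h p := by
    apply Subtype.ext
    show (((g * h) • p.1.1, (g * h) * p.1.2 * (g * h)⁻¹) : _ × _) = _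
    rw [mul_smul]
    show _ = ((g • h • p.1.1, g * (h * p.1.2 * h⁻¹) * g⁻¹) : _ × _)
    congr 1

lemma Pset_smul_def (g : H) (p : Pset n X H) :
    g • p = ⟨(g • p.1.1, g * p.1.2 * g⁻¹), (g • p).2⟩ := rfl

noncomputable def toPset (x : Wreath X H) : Pset n X H :=
  ⟨(fInv x, x.right), fInv_fixed x⟩

lemma toPset_conj (z x : Wreath X H) : toPset (z * x * z⁻¹) = z.right • toPset x := by
  apply Subtype.ext
  rw [Pset_smul_def]
  show ((fInv (z * x * z⁻¹), (z * x * z⁻¹).right) : _ × _) = (z.right • fInv x, _)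
  have h1 : (z * x * z⁻¹).right = z.right * x.right * z.right⁻¹ := by
    simp [SemidirectProduct.mul_right, SemidirectProduct.inv_right]
  rw [fInv_conj z x, h1]
  rfl

/-! ### cycle helpers -/

lemma orbit_mk_eq_iff {σ : Perm (Fin n)} {i j : Fin n} :
    (Quotient.mk'' i : orbitRel.Quotient (Subgroup.zpowers σ) (Fin n)) = Quotient.mk'' j ↔
      Perm.SameCycle σ j i := by
  rw [Quotient.eq'']
  show orbitRel (Subgroup.zpowers σ) (Fin n) i j ↔ _
  rw [MulAction.orbitRel_apply, MulAction.mem_orbit_iff]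
  constructor
  · rintro ⟨⟨g, hg⟩, hgj⟩
    obtain ⟨k, rfl⟩ := Subgroup.mem_zpowers_iff.mp hg
    exact ⟨k, hgj⟩
  · rintro ⟨k, hk⟩
    exact ⟨⟨σ ^ k, Subgroup.mem_zpowers_iff.mpr ⟨k, rfl⟩⟩, hk⟩

lemma period_pow_apply (σ : Perm (Fin n)) (i : Fin n) (j : ℕ) :
    period σ ((σ ^ j) i) = period σ i := by
  have hmem : i ∈ Function.periodicPts (σ • · : Fin n → Fin n) := by
    rw [← Function.minimalPeriod_pos_iff_mem_periodicPts, ← period_eq_minimalPeriod]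
    exact period_pos_of_orderOf_pos (orderOf_pos σ) i
  have h1 : (σ ^ j) i = (σ • · : Fin n → Fin n)^[j] i := by
    rw [smul_iterate_apply]; rfl
  rw [h1, period_eq_minimalPeriod, period_eq_minimalPeriod,
    Function.minimalPeriod_apply_iterate hmem]

lemma perm_pow_inj {σ : Perm (Fin n)} {i : Fin n} {j k : ℕ}
    (hj : j < period σ i) (hk : k < period σ i) (hjk : (σ ^ j) i = (σ ^ k) i) : j = k := by
  have key : ∀ j k : ℕ, j ≤ k → k < period σ i → (σ ^ j) i = (σ ^ k) i → k - j = 0 := by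
    intro j k hjk' hk' heq
    have h1 : (σ ^ (k - j)) ((σ ^ j) i) = (σ ^ j) i := by
      rw [← Perm.mul_apply, ← pow_add, Nat.sub_add_cancel hjk', ← heq]
    have h2 : period σ ((σ ^ j) i) ∣ k - j := by
      apply pow_smul_eq_iff_period_dvd.mp
      exact h1
    rw [period_pow_apply] at h2
    exact Nat.eq_zero_of_dvd_of_lt h2 (lt_of_le_of_lt (Nat.sub_le _ _) hk')
  rcases le_total j k with h | h
  · have := key j k h hk hjk
    omega
  · have := key k j h hj hjk.symm
    omega

lemma sameCycle_exists_nat {σ : Perm (Fin n)} {i j : Fin n} (h : Perm.SameCycle σ i j) :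
    ∃ m : ℕ, (σ ^ m) i = j := by
  obtain ⟨m, _, hm⟩ := h.exists_pow_eq'
  exact ⟨m, hm⟩

lemma exists_pow_lt_period {σ : Perm (Fin n)} {i j : Fin n} (h : ∃ m : ℕ, (σ ^ m) i = j) :
    ∃ m : ℕ, m < period σ i ∧ (σ ^ m) i = j := by
  obtain ⟨m, hm⟩ := h
  refine ⟨m % period σ i, Nat.mod_lt _ (period_pos_of_orderOf_pos (orderOf_pos σ) i), ?_⟩
  have := pow_mod_period_smul m (m := σ) (a := i)
  rw [show σ ^ (m % period σ i) • i = (σ ^ (m % period σ i)) i from rfl,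
    show σ ^ m • i = (σ ^ m) i from rfl] at this
  rw [this, hm]

lemma f_const_of_cycle {S : Type*} {σ : Perm (Fin n)} {f : Fin n → S}
    (hf : ∀ i, f (σ i) = f i) {i j : Fin n} (hc : Perm.SameCycle σ i j) : f i = f j := by
  have key : ∀ (m : ℕ) (i : Fin n), f ((σ ^ m) i) = f i := by
    intro m
    induction m with
    | zero => simp
    | succ m ih =>
      intro i
      rw [pow_succ, Perm.mul_apply, ih, hf]
  obtain ⟨m, hm⟩ := sameCycle_exists_nat hc
  rw [← hm, key]

lemma toPset_surjective : Function.Surjective (toPset : Wreath X H → Pset n X H) := by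
  classical
  rintro ⟨⟨f, h⟩, hfix⟩
  set σ : Perm (Fin n) := (h : Perm (Fin n)) with hσdef
  -- f is constant on cycles of σ
  have hf1 : ∀ i, f (σ⁻¹ i) = f i := by
    intro i
    have := congrFun hfix i
    exact this
  have hfc : ∀ {i j : Fin n}, Perm.SameCycle σ i j → f i = f j := by
    intro i j hc
    exact f_const_of_cycle (σ := σ⁻¹) hf1 (Perm.sameCycle_inv.mpr hc)
  -- basepoints
  set b : Fin n → Fin n := fun i =>
    (Quotient.mk'' i : orbitRel.Quotient (Subgroup.zpowers σ) (Fin n)).out with hbdef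
  have hbc : ∀ i, Perm.SameCycle σ i (b i) := by
    intro i
    have : (Quotient.mk'' (b i) : orbitRel.Quotient (Subgroup.zpowers σ) (Fin n)) =
        Quotient.mk'' i := Quotient.out_eq _
    exact orbit_mk_eq_iff.mp this
  have hbeq : ∀ i j, Perm.SameCycle σ i j → b i = b j := by
    intro i j hc
    have : (Quotient.mk'' i : orbitRel.Quotient (Subgroup.zpowers σ) (Fin n)) =
        Quotient.mk'' j := by
      rw [Quotient.eq'']
      show orbitRel (Subgroup.zpowers σ) (Fin n) i j
      rw [MulAction.orbitRel_apply, MulAction.mem_orbit_iff]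
      obtain ⟨k, hk⟩ := hc.symm
      exact ⟨⟨σ ^ k, Subgroup.mem_zpowers_iff.mpr ⟨k, rfl⟩⟩, hk⟩
    simp only [hbdef, this]
  have hbb : ∀ i, b (b i) = b i := fun i => hbeq _ _ (hbc i).symm
  -- representatives
  choose rep hrepspec using fun i => ConjClasses.exists_rep (f i)
  set v : Fin n → X := fun i => if b i = i then rep i else 1 with hv
  refine ⟨⟨v, h⟩, ?_⟩
  apply Subtype.ext
  show ((fInv ⟨v, h⟩, h) : _ × _) = (f, h)
  have hfInv : fInv (⟨v, h⟩ : Wreath X H) = f := by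
    funext i
    -- existence of "position" index
    have hex : ∀ i : Fin n, ∃ m : ℕ, (σ⁻¹ ^ m) i = b i := fun i =>
      sameCycle_exists_nat (Perm.sameCycle_inv.mpr (hbc i))
    set jj : Fin n → ℕ := fun i => Nat.find (hex i) with hjjdef
    have hjj : ∀ i, (σ⁻¹ ^ (jj i)) i = b i := fun i => Nat.find_spec (hex i)
    have hperinv : ∀ i : Fin n, period σ⁻¹ i = period σ i := fun i => period_inv σ i
    have hjjlt : ∀ i, jj i < period σ i := by
      intro i
      obtain ⟨m, hmlt, hm⟩ := exists_pow_lt_period (hex i)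
      calc jj i ≤ m := Nat.find_min' _ hm
        _ < period σ⁻¹ i := hmlt
        _ = period σ i := hperinv i
    -- σ-cycle relation between τ^j i and i
    have hsc : ∀ (j : ℕ) (i : Fin n), Perm.SameCycle σ ((σ⁻¹ ^ j) i) i := by
      intro j i
      refine ⟨(j : ℤ), ?_⟩
      rw [zpow_natCast, inv_pow, perm_apply_inv_self]
    have hx : sig (⟨v, h⟩ : Wreath X H) = σ := rfl
    have claim : ∀ j, j ≤ period σ i →
        ((⟨v, h⟩ : Wreath X H) ^ j).left i = if jj i < j then rep (b i) else 1 := by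
      intro j
      induction j with
      | zero =>
        intro _
        rw [pow_zero]
        simp [SemidirectProduct.one_left]
      | succ j ih =>
        intro hj
        have hjlt : j < period σ i := Nat.lt_of_succ_le hj
        rw [left_pow_succ, hx, ih (le_of_lt hjlt)]
        have hleft : (⟨v, h⟩ : Wreath X H).left = v := rfl
        rw [hleft]
        simp only [hv]
        have hbj : b ((σ⁻¹ ^ j) i) = b i := hbeq _ _ (hsc j i)
        rcases lt_trichotomy j (jj i) with hlt | heq | hgt
        · -- factor is 1, product is 1
          have hne : ¬ b ((σ⁻¹ ^ j) i) = (σ⁻¹ ^ j) i := by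
            intro hcontr
            have : (σ⁻¹ ^ j) i = b i := by rw [← hcontr, hbj]
            have hle : jj i ≤ j := Nat.find_min' (hex i) this
            omega
          rw [if_neg hne, mul_one, if_neg (by omega), if_neg (by omega)]
        · -- factor is the representative
          have hpt : (σ⁻¹ ^ j) i = b i := heq ▸ hjj i
          have hpos : b ((σ⁻¹ ^ j) i) = (σ⁻¹ ^ j) i := by rw [hbj, hpt]
          rw [if_pos hpos, if_neg (by omega), if_pos (by omega), one_mul, hpt]
        · -- factor is 1 again
          have hne : ¬ b ((σ⁻¹ ^ j) i) = (σ⁻¹ ^ j) i := by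
            intro hcontr
            have h1 : (σ⁻¹ ^ j) i = b i := by rw [← hcontr, hbj]
            have h2 : (σ⁻¹ ^ j) i = (σ⁻¹ ^ (jj i)) i := by rw [h1, hjj]
            have : j = jj i := by
              apply perm_pow_inj (σ := σ⁻¹) _ _ h2 <;> rw [hperinv i] <;> omega
            omega
          rw [if_neg hne, mul_one, if_pos (by omega), if_pos (by omega)]
    have : invAt (⟨v, h⟩ : Wreath X H) i = rep (b i) := by
      rw [invAt, hx, claim (period σ i) le_rfl, if_pos (hjjlt i)]
    show ConjClasses.mk (invAt (⟨v, h⟩ : Wreath X H) i) = f i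
    rw [this, hrepspec (b i), ← hfc (hbc i)]
  rw [hfInv]

lemma wext {a b : Wreath X H} (h1 : a.left = b.left) (h2 : a.right = b.right) : a = b := by
  cases a; cases b; cases h1; cases h2; rfl

lemma isConj_of_toPset_eq {x y : Wreath X H} (hxy : toPset x = toPset y) : IsConj x y := by
  classical
  have hval := congrArg Subtype.val hxy
  have hr : x.right = y.right := congrArg Prod.snd hval
  have hfeq : fInv x = fInv y := congrArg Prod.fst hval
  set σ : Perm (Fin n) := sig x with hσdef
  have hsy : sig y = σ := by rw [hσdef]; show _ = (x.right : Perm (Fin n)); rw [hr]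
  -- conjugating elements on each coordinate
  have hcc : ∀ i, ∃ c : X, c * invAt x i * c⁻¹ = invAt y i := by
    intro i
    have h2 : ConjClasses.mk (invAt x i) = ConjClasses.mk (invAt y i) := congrFun hfeq i
    exact isConj_iff.mp (ConjClasses.mk_eq_mk_iff_isConj.mp h2)
  choose cc hccspec using hcc
  -- basepoints
  set b : Fin n → Fin n := fun i =>
    (Quotient.mk'' i : orbitRel.Quotient (Subgroup.zpowers σ) (Fin n)).out with hbdef
  have hbc : ∀ i, Perm.SameCycle σ i (b i) := by
    intro i
    exact orbit_mk_eq_iff.mp (Quotient.out_eq _)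
  have hbeq : ∀ i j, Perm.SameCycle σ i j → b i = b j := by
    intro i j hc
    have : (Quotient.mk'' i : orbitRel.Quotient (Subgroup.zpowers σ) (Fin n)) =
        Quotient.mk'' j := by
      rw [Quotient.eq'']
      show orbitRel (Subgroup.zpowers σ) (Fin n) i j
      rw [MulAction.orbitRel_apply, MulAction.mem_orbit_iff]
      obtain ⟨k, hk⟩ := hc.symm
      exact ⟨⟨σ ^ k, Subgroup.mem_zpowers_iff.mpr ⟨k, rfl⟩⟩, hk⟩
    simp only [hbdef, this]
  have hbb : ∀ i, b (b i) = b i := fun i => hbeq _ _ (hbc i).symm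
  have hperinv : ∀ i : Fin n, period σ⁻¹ i = period σ i := fun i => period_inv σ i
  -- position of i in its cycle, counting from the basepoint
  have hex : ∀ i : Fin n, ∃ m : ℕ, (σ⁻¹ ^ m) (b i) = i := fun i =>
    sameCycle_exists_nat (Perm.sameCycle_inv.mpr (hbc i).symm)
  set pos : Fin n → ℕ := fun i => Nat.find (hex i) with hposdef
  have hpos : ∀ i, (σ⁻¹ ^ (pos i)) (b i) = i := fun i => Nat.find_spec (hex i)
  have hposlt : ∀ i, pos i < period σ (b i) := by
    intro i
    obtain ⟨m, hmlt, hm⟩ := exists_pow_lt_period (σ := σ⁻¹) (hex i)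
    calc pos i ≤ m := Nat.find_min' _ hm
      _ < period σ⁻¹ (b i) := hmlt
      _ = period σ (b i) := hperinv _
  -- the conjugating function
  set u : Fin n → X := fun i =>
    ((y ^ pos i).left (b i))⁻¹ * cc (b i) * ((x ^ pos i).left (b i)) with hu
  set z : Wreath X H := ⟨u, 1⟩ with hzdef
  refine isConj_iff.mpr ⟨z, ?_⟩
  have hzr : z.right = (1 : H) := rfl
  have hzs : sig z = 1 := by rw [hzdef]; simp [sig]
  -- the key pointwise identity
  have key : ∀ i, u i * x.left i = y.left i * u (σ⁻¹ i) := by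
    intro i
    have hbB : b (b i) = b i := hbb i
    have hji : (σ⁻¹ ^ pos i) (b i) = i := hpos i
    have hjlt : pos i < period σ (b i) := hposlt i
    -- recurrences
    have hxrec : (x ^ (pos i + 1)).left (b i) = (x ^ pos i).left (b i) * x.left i := by
      have h1 := left_pow_succ x (pos i) (b i)
      rw [← hσdef] at h1
      rw [hji] at h1
      exact h1
    have hyrec : (y ^ (pos i + 1)).left (b i) = (y ^ pos i).left (b i) * y.left i := by
      have h1 := left_pow_succ y (pos i) (b i)
      rw [hsy, hji] at h1
      exact h1
    have hbi : b (σ⁻¹ i) = b i := by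
      apply hbeq
      exact ⟨(1 : ℤ), by simp⟩
    have hstep : (σ⁻¹ ^ (pos i + 1)) (b i) = σ⁻¹ i := by
      rw [pow_succ', Perm.mul_apply, hji]
    by_cases hcase : pos i + 1 < period σ (b i)
    · -- σ⁻¹ i is not the basepoint; its position is pos i + 1
      have hple : pos (σ⁻¹ i) ≤ pos i + 1 := Nat.find_min' _ (by rw [hbi]; exact hstep)
      have hpge : pos (σ⁻¹ i) = pos i + 1 := by
        have hspec : (σ⁻¹ ^ pos (σ⁻¹ i)) (b (σ⁻¹ i)) = σ⁻¹ i := hpos (σ⁻¹ i)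
        rw [hbi] at hspec
        apply perm_pow_inj (σ := σ⁻¹) (i := b i) ?_ ?_ (by rw [hspec, hstep]) <;>
          rw [hperinv] <;> omega
      have huσ : u (σ⁻¹ i) =
          ((y ^ (pos i + 1)).left (b i))⁻¹ * cc (b i) * ((x ^ (pos i + 1)).left (b i)) := by
        simp only [hu]
        rw [hpge, hbi]
      have hui : u i = ((y ^ pos i).left (b i))⁻¹ * cc (b i) * ((x ^ pos i).left (b i)) := by
        simp only [hu]
      rw [hui, huσ, hxrec, hyrec]
      group
    · -- σ⁻¹ i is the basepoint
      have hjm : pos i + 1 = period σ (b i) := by omega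
      have hback : σ⁻¹ i = b i := by
        have h2 : (σ⁻¹ ^ period σ (b i)) (b i) = b i := by
          have h3 := pow_period_smul σ⁻¹ (b i)
          rw [hperinv] at h3
          exact h3
        rw [← hstep, hjm, h2]
      have hposB : pos (b i) = 0 := by
        have : (σ⁻¹ ^ 0) (b (b i)) = b i := by rw [pow_zero, Perm.one_apply, hbB]
        exact Nat.le_zero.mp (Nat.find_min' _ this)
      have huB : u (b i) = cc (b i) := by
        simp only [hu]
        rw [hposB, hbB, pow_zero, pow_zero, SemidirectProduct.one_left, Pi.one_apply,
          inv_one, one_mul, mul_one]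
      have hccB : cc (b i) * (x ^ period σ (b i)).left (b i) =
          (y ^ period σ (b i)).left (b i) * cc (b i) := by
        have h4 := hccspec (b i)
        have e1 : invAt x (b i) = (x ^ period σ (b i)).left (b i) := rfl
        have e2 : invAt y (b i) = (y ^ period σ (b i)).left (b i) := by
          rw [invAt, hsy]
        rw [e1, e2, mul_inv_eq_iff_eq_mul] at h4
        exact h4
      have hui : u i = ((y ^ pos i).left (b i))⁻¹ * cc (b i) * ((x ^ pos i).left (b i)) := by
        simp only [hu]
      rw [hui, hback, huB]
      have hXm : (x ^ period σ (b i)).left (b i) = (x ^ pos i).left (b i) * x.left i := by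
        rw [← hjm]; exact hxrec
      have hYm : (y ^ period σ (b i)).left (b i) = (y ^ pos i).left (b i) * y.left i := by
        rw [← hjm]; exact hyrec
      have hmain : cc (b i) * ((x ^ pos i).left (b i) * x.left i) =
          ((y ^ pos i).left (b i) * y.left i) * cc (b i) := by
        rw [← hXm, ← hYm]; exact hccB
      calc ((y ^ pos i).left (b i))⁻¹ * cc (b i) * ((x ^ pos i).left (b i)) * x.left i
          = ((y ^ pos i).left (b i))⁻¹ * (cc (b i) * ((x ^ pos i).left (b i) * x.left i)) := by
            group
        _ = ((y ^ pos i).left (b i))⁻¹ * (((y ^ pos i).left (b i) * y.left i) * cc (b i)) := by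
            rw [hmain]
        _ = y.left i * cc (b i) := by group
  -- conclude
  apply wext
  · funext i
    have hc := conj_left_apply z x i
    rw [hzs] at hc
    simp only [Perm.one_apply] at hc
    rw [hc]
    show u i * x.left i * (u (σ⁻¹ i))⁻¹ = y.left i
    rw [key i]
    group
  · show (z * x * z⁻¹).right = y.right
    rw [SemidirectProduct.mul_right, SemidirectProduct.mul_right,
      SemidirectProduct.inv_right, hzr, hr]
    group

instance [Finite X] : Finite (Wreath X H) :=
  Finite.of_injective (fun x => (x.left, x.right))
    (fun a b h => wext (congrArg Prod.fst h) (congrArg Prod.snd h))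

instance [Finite X] : Finite (Pset n X H) :=
  (Subtype.finite : Finite {p : (Fin n → ConjClasses X) × H // p.2 • p.1 = p.1})

/-- The induced map from conjugacy classes of the wreath product to `H`-orbits on `Pset`. -/
noncomputable def Fmap : ConjClasses (Wreath X H) → orbitRel.Quotient H (Pset n X H) :=
  Quotient.lift
    (fun x => (Quotient.mk'' (toPset x) : orbitRel.Quotient H (Pset n X H)))
    (by
      intro a c hac
      have hic : IsConj a c := hac
      obtain ⟨g, hg⟩ := isConj_iff.mp hic
      apply Quotient.sound'
      show orbitRel H (Pset n X H) (toPset a) (toPset c)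
      rw [MulAction.orbitRel_apply, MulAction.mem_orbit_iff]
      refine ⟨(g.right)⁻¹, ?_⟩
      rw [← hg, toPset_conj, inv_smul_smul])

lemma Fmap_mk (x : Wreath X H) : Fmap (ConjClasses.mk x) = Quotient.mk'' (toPset x) := rfl

lemma Fmap_bijective : Function.Bijective (Fmap : ConjClasses (Wreath X H) → _) := by
  constructor
  · intro c1 c2
    obtain ⟨x, rfl⟩ := ConjClasses.mk_surjective c1
    obtain ⟨y, rfl⟩ := ConjClasses.mk_surjective c2
    intro hF
    rw [Fmap_mk, Fmap_mk, Quotient.eq''] at hF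
    have hF' : toPset x ∈ MulAction.orbit H (toPset y) := by
      rw [← MulAction.orbitRel_apply]; exact hF
    obtain ⟨g, hg⟩ := MulAction.mem_orbit_iff.mp hF'
    set z : Wreath X H := ⟨1, g⟩ with hz
    have hzr : z.right = g := rfl
    have h1 : toPset (z * y * z⁻¹) = toPset x := by
      rw [toPset_conj, hzr, hg]
    have h2 : IsConj x (z * y * z⁻¹) := (isConj_of_toPset_eq h1.symm)
    have h3 : IsConj y (z * y * z⁻¹) := isConj_iff.mpr ⟨z, rfl⟩
    rw [ConjClasses.mk_eq_mk_iff_isConj]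
    exact h2.trans h3.symm
  · intro q
    obtain ⟨p, rfl⟩ := Quotient.exists_rep q
    obtain ⟨x, rfl⟩ := toPset_surjective p
    exact ⟨ConjClasses.mk x, rfl⟩

lemma exists_smul_eq_of_mk_eq {G : Type*} [Group G] {α : Type*} [MulAction G α] {a c : α}
    (h : (Quotient.mk'' a : orbitRel.Quotient G α) = Quotient.mk'' c) : ∃ g : G, g • c = a := by
  have h2 : orbitRel G α a c := Quotient.eq''.mp h
  rw [MulAction.orbitRel_apply] at h2
  exact MulAction.mem_orbit_iff.mp h2

lemma mk_eq_of_smul_eq {G : Type*} [Group G] {α : Type*} [MulAction G α] {a c : α}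
    (g : G) (h : g • c = a) : (Quotient.mk'' a : orbitRel.Quotient G α) = Quotient.mk'' c := by
  apply Quotient.sound'
  rw [MulAction.orbitRel_apply, MulAction.mem_orbit_iff]
  exact ⟨g, h⟩

/-- constructor for elements of `Pset`. -/
def mkP (fi : Fin n → ConjClasses X) (h : H) (hfix : h • fi = fi) : Pset n X H :=
  ⟨(fi, h), hfix⟩

lemma smul_mkP (g : H) (fi : Fin n → ConjClasses X) (h : H) (hfix : h • fi = fi)
    {hfix2 : (g * h * g⁻¹) • (g • fi) = g • fi} :
    g • mkP fi h hfix = mkP (g • fi) (g * h * g⁻¹) hfix2 := rfl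

lemma mkP_inj {f1 f2 : Fin n → ConjClasses X} {h1 h2 : H} {p1 : h1 • f1 = f1}
    {p2 : h2 • f2 = f2} (h : mkP f1 h1 p1 = mkP f2 h2 p2) : f1 = f2 ∧ h1 = h2 := by
  have := congrArg Subtype.val h
  exact ⟨congrArg Prod.fst this, congrArg Prod.snd this⟩

lemma pset_mem_stab {fi : Fin n → ConjClasses X} (h : MulAction.stabilizer H fi) :
    ((h : H) • fi = fi) := h.2

/-- The parametrization of `H`-orbits on `Pset` by orbit representatives together with
conjugacy classes of their stabilizers. -/
noncomputable def Psi {f : ℕ} (reps : Fin f → (Fin n → ConjClasses X)) :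
    (Σ i : Fin f, ConjClasses (MulAction.stabilizer H (reps i))) →
      orbitRel.Quotient H (Pset n X H) :=
  fun s => Quotient.liftOn' s.2
    (fun h => (Quotient.mk'' (mkP (reps s.1) (h : H) (pset_mem_stab h)) :
      orbitRel.Quotient H (Pset n X H)))
    (by
      intro a c hac
      have hic : IsConj a c := hac
      obtain ⟨g, hg⟩ := isConj_iff.mp hic
      have hgfix : ((g : H) * (a : H) * (g : H)⁻¹) • ((g : H) • reps s.1) = (g : H) • reps s.1 := by
        rw [mul_smul, mul_smul, inv_smul_smul, pset_mem_stab a]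
      apply mk_eq_of_smul_eq ((g : H)⁻¹)
      rw [inv_smul_eq_iff, smul_mkP (g : H) _ _ _ (hfix2 := hgfix)]
      have e1 : (g : H) • reps s.1 = reps s.1 := g.2
      have e2 : (g : H) * (a : H) * (g : H)⁻¹ = (c : H) := by
        rw [← hg]; push_cast; rfl
      apply Subtype.ext
      show (reps s.1, (c : H)) = ((g : H) • reps s.1, (g : H) * (a : H) * (g : H)⁻¹)
      rw [e1, e2])

lemma Psi_mk {f : ℕ} (reps : Fin f → (Fin n → ConjClasses X)) (i : Fin f)
    (h : MulAction.stabilizer H (reps i)) :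
    Psi reps ⟨i, ConjClasses.mk h⟩ =
      Quotient.mk'' (mkP (reps i) (h : H) (pset_mem_stab h)) := rfl

lemma Psi_bijective {f : ℕ} (reps : Fin f → (Fin n → ConjClasses X))
    (hreps : Function.Bijective fun i : Fin f =>
      (Quotient.mk'' (reps i) : orbitRel.Quotient H (Fin n → ConjClasses X))) :
    Function.Bijective (Psi (H := H) reps) := by
  constructor
  · rintro ⟨i, ca⟩ ⟨i', cb⟩ hP
    obtain ⟨a, rfl⟩ := ConjClasses.mk_surjective ca
    obtain ⟨b, rfl⟩ := ConjClasses.mk_surjective cb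
    rw [Psi_mk, Psi_mk] at hP
    obtain ⟨g, hg⟩ := exists_smul_eq_of_mk_eq hP
    have hgfix : (g * (b : H) * g⁻¹) • (g • reps i') = g • reps i' := by
      rw [mul_smul, mul_smul, inv_smul_smul, pset_mem_stab b]
    rw [smul_mkP g _ _ _ (hfix2 := hgfix)] at hg
    obtain ⟨hg1, hg2⟩ := mkP_inj hg
    have hii : i' = i := by
      apply hreps.1
      exact mk_eq_of_smul_eq g⁻¹ (by rw [← hg1, inv_smul_smul])
    subst hii
    have hgstab : g ∈ MulAction.stabilizer H (reps i') := hg1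
    have hconj : (⟨g, hgstab⟩ : MulAction.stabilizer H (reps i')) * b * ⟨g, hgstab⟩⁻¹ = a := by
      apply Subtype.ext
      push_cast
      exact hg2
    congr 1
    rw [ConjClasses.mk_eq_mk_iff_isConj]
    exact (isConj_iff.mpr ⟨_, hconj⟩).symm
  · intro q
    obtain ⟨p, rfl⟩ := Quotient.exists_rep q
    obtain ⟨⟨f0, h0⟩, hfix⟩ := p
    obtain ⟨i, hi⟩ := hreps.2 (Quotient.mk'' f0)
    obtain ⟨g, hg⟩ := exists_smul_eq_of_mk_eq hi
    have hstab : g * h0 * g⁻¹ ∈ MulAction.stabilizer H (reps i) := by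
      show (g * h0 * g⁻¹) • reps i = reps i
      rw [← hg, mul_smul, mul_smul, inv_smul_smul]
      have h5 : h0 • f0 = f0 := hfix
      rw [h5]
    refine ⟨⟨i, ConjClasses.mk ⟨g * h0 * g⁻¹, hstab⟩⟩, ?_⟩
    rw [Psi_mk]
    apply mk_eq_of_smul_eq g
    have hgfix : (g * h0 * g⁻¹) • (g • f0) = g • f0 := by
      rw [mul_smul, mul_smul, inv_smul_smul]
      have h5 : h0 • f0 = f0 := hfix
      rw [h5]
    have hp : (⟨(f0, h0), hfix⟩ : Pset n X H) = mkP f0 h0 hfix := rfl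
    rw [hp, smul_mkP g _ _ _ (hfix2 := hgfix)]
    apply Subtype.ext
    show (g • f0, g * h0 * g⁻¹) = (reps i, g * h0 * g⁻¹)
    rw [hg]

end WreathAux

/-- `σ(h)`: the number of cycles of a permutation `h` in its disjoint cycle decomposition,
with fixed points counted as cycles of length 1; equivalently, the number of orbits of
the cyclic group generated by `h`. -/
noncomputable def cycleCount {ι : Type*} (h : Perm ι) : ℕ :=
  Nat.card (orbitRel.Quotient (Subgroup.zpowers h) ι)

/-- `n(G, α)`: the number of orbits of a group action. -/
noncomputable def orbitCount (G : Type*) [Group G] (α : Type*) [MulAction G α] : ℕ :=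
  Nat.card (orbitRel.Quotient G α)

/-- `k(X ≀ H)` is the sum, over representatives of the orbits of `H` on
`Irr(X)^n ≃ (ConjClasses X)^n`, of the class numbers of the inertia (stabilizer) groups. -/
theorem statement1 (n : ℕ) (X : Type) [Group X] [Finite X] [Nontrivial X]
    (H : Subgroup (Perm (Fin n))) (f : ℕ)
    (reps : Fin f → (Fin n → ConjClasses X))
    (hreps : Function.Bijective fun i : Fin f =>
      (Quotient.mk'' (reps i) : orbitRel.Quotient H (Fin n → ConjClasses X))) :
    kclass (Wreath X H) = ∑ i : Fin f, kclass (MulAction.stabilizer H (reps i)) := by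
  classical
  have h1 : Nat.card (ConjClasses (Wreath X H)) =
      Nat.card (orbitRel.Quotient H (WreathAux.Pset n X H)) :=
    Nat.card_eq_of_bijective _ WreathAux.Fmap_bijective
  have h2 : Nat.card (Σ i : Fin f, ConjClasses (MulAction.stabilizer H (reps i))) =
      Nat.card (orbitRel.Quotient H (WreathAux.Pset n X H)) :=
    Nat.card_eq_of_bijective _ (WreathAux.Psi_bijective reps hreps)
  have h3 : Nat.card (Σ i : Fin f, ConjClasses (MulAction.stabilizer H (reps i))) =
      ∑ i : Fin f, Nat.card (ConjClasses (MulAction.stabilizer H (reps i))) := by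
    letI : ∀ i : Fin f, Fintype (ConjClasses (MulAction.stabilizer H (reps i))) :=
      fun i => Fintype.ofFinite _
    rw [Nat.card_eq_fintype_card, Fintype.card_sigma]
    exact Finset.sum_congr rfl fun i _ => (Nat.card_eq_fintype_card).symm
  show Nat.card (ConjClasses (Wreath X H)) = ∑ i : Fin f, kclass (MulAction.stabilizer H (reps i))
  rw [h1, ← h2, h3]
  rfl
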